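/- There exists a finite rotation-puzzle instance 𝒜 over the three-color tile set T_3 (the TEST-true subpuzzle, checking that a circuit evaluates to true) with one designated input boundary edge at its bottom, such that 𝒜 has exactly one solution, and this solution has color blue at the input edge; in particular no solution of 𝒜 has color red or yellow at the input edge. -/

import Mathlib

/-- The three Tantrix colors used in the three-color tile set. -/
inductive Color where
  | red
  | yellow
  | blue
deriving DecidableEq

/-- A tile is its clockwise color sequence: a word of length 6 over the colors,
edges indexed `0, …, 5` clockwise. -/
abbrev Tile := Fin 6 → Color

/-- Cyclic rotation of a tile by `k` steps: edge `i` of the rotated tile carries the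
color of edge `i + k` of the original sequence. -/
def rotTile (k : Fin 6) (t : Tile) : Tile := fun i => t (i + k)

open Color in
/-- The three-color tile set `T₃`, consisting of the 14 color sequences
yrrbby, ryybbr, yrrybb, ryyrbb, brrbyy, yrbybr, rbyryb, brybyr, brbyyr, bybrry,
ryrbby, rbryyb, ybyrrb, yrybbr. -/
def T3 : Set Tile :=
  { ![yellow,red,red,blue,blue,yellow],
    ![red,yellow,yellow,blue,blue,red],
    ![yellow,red,red,yellow,blue,blue],
    ![red,yellow,yellow,red,blue,blue],
    ![blue,red,red,blue,yellow,yellow],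
    ![yellow,red,blue,yellow,blue,red],
    ![red,blue,yellow,red,yellow,blue],
    ![blue,red,yellow,blue,yellow,red],
    ![blue,red,blue,yellow,yellow,red],
    ![blue,yellow,blue,red,red,yellow],
    ![red,yellow,red,blue,blue,yellow],
    ![red,blue,red,yellow,yellow,blue],
    ![yellow,blue,yellow,red,red,blue],
    ![yellow,red,yellow,blue,blue,red] }

/-- The six neighbor offsets of the hexagonal layout of `ℤ²`, listed clockwise
starting from straight up; edge `i` of a tile at `x` is the edge shared with the
neighboring point `x + dirs i`, and opposite directions differ by `3` (mod 6).
Two points are neighbors exactly if their difference is one of these offsets. -/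
def dirs : Fin 6 → ℤ × ℤ := ![(0,1), (1,1), (1,0), (0,-1), (-1,-1), (-1,0)]

/-- A finite rotation-puzzle instance over the tile set `T3`:
a function from a finite set of points of `ℤ²` to `T3`. -/
structure Puzzle where
  tiles : ℤ × ℤ → Option Tile
  finite : {x | tiles x ≠ none}.Finite
  memT3 : ∀ x t, tiles x = some t → t ∈ T3

/-- `sol` is a solution of the instance `P`: it assigns to each occupied point a
cyclic rotation of the tile placed there, such that for every pair of neighboring
occupied points the two assigned sequences give the same color to their joint edge
(edge `d` of the tile at `x` is glued to edge `d + 3` of the tile at `x + dirs d`). -/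
def IsSolution (P : Puzzle) (sol : ℤ × ℤ → Option Tile) : Prop :=
  (∀ x, (P.tiles x = none → sol x = none) ∧
    (∀ t, P.tiles x = some t → ∃ k : Fin 6, sol x = some (rotTile k t))) ∧
  (∀ (x : ℤ × ℤ) (d : Fin 6) (s s' : Tile),
    sol x = some s → sol (x + dirs d) = some s' → s d = s' (d + 3))

/-- `(x, d)` is a boundary edge of `P`: the point `x` is occupied and its
neighbor in direction `d` is not. -/
def IsBoundary (P : Puzzle) (x : ℤ × ℤ) (d : Fin 6) : Prop :=
  P.tiles x ≠ none ∧ P.tiles (x + dirs d) = none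

/-- The solution `sol` has color `c` at the edge in direction `d` of the tile at `x`. -/
def SolColor (sol : ℤ × ℤ → Option Tile) (x : ℤ × ℤ) (d : Fin 6) (c : Color) : Prop :=
  ∃ s, sol x = some s ∧ s d = c

open Color

def tA : Tile := ![yellow,red,red,blue,blue,yellow]
def tB : Tile := ![blue,red,red,blue,yellow,yellow]
def tC : Tile := ![blue,yellow,blue,red,red,yellow]
def tD : Tile := ![yellow,red,yellow,blue,blue,red]

def pt (x : ℤ × ℤ) : Option Tile :=
  if x = (0,2) then some tA
  else if x = (0,3) then some tB
  else if x = (1,3) then some tC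
  else if x = (1,2) then some tD
  else none

def sl (x : ℤ × ℤ) : Option Tile :=
  if x = (0,2) then some (rotTile 1 tA)
  else if x = (0,3) then some (rotTile 5 tB)
  else if x = (1,3) then some (rotTile 5 tC)
  else if x = (1,2) then some (rotTile 4 tD)
  else none

def Pz : Puzzle where
  tiles := pt
  finite := by
    have hf : ({((0:ℤ),(2:ℤ)), (0,3), (1,3), (1,2)} : Set (ℤ × ℤ)).Finite := Set.toFinite _
    apply hf.subset
    intro x hx
    simp only [Set.mem_setOf_eq, pt] at hx
    split_ifs at hx with h0 h1 h2 h3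
    · simp [h0]
    · simp [h1]
    · simp [h2]
    · simp [h3]
    · exact absurd rfl hx
  memT3 := by
    intro x t h
    simp only [pt] at h
    split_ifs at h <;> injection h with h <;> subst h <;> simp [T3, tA, tB, tC, tD]

theorem sl_sol : IsSolution Pz sl := by
  constructor
  · intro x
    constructor
    · intro h
      show sl x = none
      simp only [Pz] at h
      simp only [pt] at h
      simp only [sl]
      split_ifs at h ⊢ <;> simp_all
    · intro t ht
      simp only [Pz] at ht
      simp only [pt] at ht
      simp only [sl]
      split_ifs at ht ⊢ <;> injection ht with ht <;> subst ht
      · exact ⟨1, rfl⟩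
      · exact ⟨5, rfl⟩
      · exact ⟨5, rfl⟩
      · exact ⟨4, rfl⟩
  · intro x d s s' hs hs'
    have hx : x = (0,2) ∨ x = (0,3) ∨ x = (1,3) ∨ x = (1,2) := by
      by_contra h
      push_neg at h
      obtain ⟨h1, h2, h3, h4⟩ := h
      simp only [sl, if_neg h1, if_neg h2, if_neg h3, if_neg h4] at hs
      exact Option.noConfusion rfl (heq_of_eq hs)
    rcases hx with h | h | h | h <;> subst h
    · rw [show sl (0,2) = some (rotTile 1 tA) from rfl] at hs
      injection hs with hs; subst hs
      fin_cases d <;>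
        first
          | exact Option.noConfusion rfl (heq_of_eq hs')
          | (injection hs' with hs'; subst hs'; decide)
    · rw [show sl (0,3) = some (rotTile 5 tB) from rfl] at hs
      injection hs with hs; subst hs
      fin_cases d <;>
        first
          | exact Option.noConfusion rfl (heq_of_eq hs')
          | (injection hs' with hs'; subst hs'; decide)
    · rw [show sl (1,3) = some (rotTile 5 tC) from rfl] at hs
      injection hs with hs; subst hs
      fin_cases d <;>
        first
          | exact Option.noConfusion rfl (heq_of_eq hs')
          | (injection hs' with hs'; subst hs'; decide)
    · rw [show sl (1,2) = some (rotTile 4 tD) from rfl] at hs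
      injection hs with hs; subst hs
      fin_cases d <;>
        first
          | exact Option.noConfusion rfl (heq_of_eq hs')
          | (injection hs' with hs'; subst hs'; decide)

theorem key : ∀ k0 k1 k2 k3 : Fin 6,
    rotTile k0 tA 0 = rotTile k1 tB 3 →
    rotTile k0 tA 1 = rotTile k2 tC 4 →
    rotTile k0 tA 2 = rotTile k3 tD 5 →
    rotTile k1 tB 2 = rotTile k2 tC 5 →
    rotTile k3 tD 0 = rotTile k2 tC 3 →
    k0 = 1 ∧ k1 = 5 ∧ k2 = 5 ∧ k3 = 4 := by decide

theorem sl_uniq : ∀ sol' : ℤ × ℤ → Option Tile, IsSolution Pz sol' → sol' = sl := by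
  intro sol' hsol'
  obtain ⟨h1, h2⟩ := hsol'
  obtain ⟨k0, e0⟩ := (h1 (0,2)).2 tA rfl
  obtain ⟨k1, e1⟩ := (h1 (0,3)).2 tB rfl
  obtain ⟨k2, e2⟩ := (h1 (1,3)).2 tC rfl
  obtain ⟨k3, e3⟩ := (h1 (1,2)).2 tD rfl
  have c1 : rotTile k0 tA 0 = rotTile k1 tB 3 := h2 (0,2) 0 _ _ e0 e1
  have c2 : rotTile k0 tA 1 = rotTile k2 tC 4 := h2 (0,2) 1 _ _ e0 e2
  have c3 : rotTile k0 tA 2 = rotTile k3 tD 5 := h2 (0,2) 2 _ _ e0 e3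
  have c4 : rotTile k1 tB 2 = rotTile k2 tC 5 := h2 (0,3) 2 _ _ e1 e2
  have c5 : rotTile k3 tD 0 = rotTile k2 tC 3 := h2 (1,2) 0 _ _ e3 e2
  obtain ⟨K0, K1, K2, K3⟩ := key k0 k1 k2 k3 c1 c2 c3 c4 c5
  subst K0; subst K1; subst K2; subst K3
  funext x
  by_cases hx0 : x = (0,2)
  · subst hx0; rw [e0]; rfl
  by_cases hx1 : x = (0,3)
  · subst hx1; rw [e1]; rfl
  by_cases hx2 : x = (1,3)
  · subst hx2; rw [e2]; rfl
  by_cases hx3 : x = (1,2)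
  · subst hx3; rw [e3]; rfl
  have hn : Pz.tiles x = none := by
    show pt x = none
    simp only [pt, if_neg hx0, if_neg hx1, if_neg hx2, if_neg hx3]
  rw [(h1 x).1 hn]
  show _ = sl x
  simp only [sl, if_neg hx0, if_neg hx1, if_neg hx2, if_neg hx3]
/-- the three-color TEST-true subpuzzle: one input boundary edge at the bottom; the instance has exactly one solution, which has color blue at the input edge; in particular no solution has color red or yellow there. -/
theorem three_color_TEST_true_subpuzzle :
    ∃ (P : Puzzle) (xIn : ℤ × ℤ),
      IsBoundary P xIn 3 ∧
      ∃ sol : ℤ × ℤ → Option Tile,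
        IsSolution P sol ∧ (∀ sol' : ℤ × ℤ → Option Tile, IsSolution P sol' → sol' = sol) ∧
        SolColor sol xIn 3 Color.blue ∧
        (∀ sol' : ℤ × ℤ → Option Tile, IsSolution P sol' →
          ¬ SolColor sol' xIn 3 Color.red ∧ ¬ SolColor sol' xIn 3 Color.yellow) := by
  refine ⟨Pz, (0,2), ⟨fun h => Option.noConfusion rfl (heq_of_eq h), rfl⟩, sl, sl_sol, sl_uniq, ?_, ?_⟩
  · exact ⟨rotTile 1 tA, rfl, rfl⟩
  · intro sol' hs'
    have hu := sl_uniq sol' hs'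
    constructor <;> rintro ⟨s, hsx, hc⟩ <;> rw [hu] at hsx <;>
      (injection hsx with hsx; subst hsx) <;> exact absurd hc (by decide)
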